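/- Let q ∈ ℂ with 0 < |q| < 1, and let α, β, z be elements of a unital *-algebra A over ℂ satisfying the relations (s4rel) with parameter q. Let χ: A → ℂ be a unital ℂ-algebra homomorphism satisfying χ(a*) = conj(χ(a)) for all a ∈ A. Then χ(β) = 0, χ(z) is real, and |χ(α)|² + χ(z)² = 1. -/

import Mathlib

/-- The relations (s4rel) defining the quantum 4-sphere `S⁴_q`:
`z* = z`, `zα = αz`, `zβ = βz`, `βα = conj(q)·αβ`, `β*α = q·αβ*`, `ββ* = β*β`,
`α*α + |q|²·β*β + z² = 1`, `αα* + ββ* + z² = 1`, where `|q|² = q·conj q`. -/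
def S4Rel {A : Type*} [Ring A] [Algebra ℂ A] [StarRing A] [StarModule ℂ A]
    (q : ℂ) (α β z : A) : Prop :=
  star z = z ∧ z * α = α * z ∧ z * β = β * z ∧
    β * α = (starRingEnd ℂ) q • (α * β) ∧
    star β * α = q • (α * star β) ∧
    β * star β = star β * β ∧
    star α * α + (q * (starRingEnd ℂ) q) • (star β * β) + z ^ 2 = 1 ∧
    α * star α + β * star β + z ^ 2 = 1

/-- `A` (with marked elements `α, β, z`) is *the* universal unital complex *-algebra on
generators `α, β, z` subject to the relations (s4rel) with parameter `q`, i.e. the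
algebra `A_q` of the quantum 4-sphere `S⁴_q`: the generators satisfy the relations, and
for any unital complex *-algebra with elements satisfying the relations there is a unique
unital *-algebra homomorphism sending generators to those elements. -/
def IsUniversalS4 (q : ℂ) (A : Type) [Ring A] [Algebra ℂ A] [StarRing A]
    [StarModule ℂ A] (α β z : A) : Prop :=
  S4Rel q α β z ∧
    ∀ (B : Type) [Ring B] [Algebra ℂ B] [StarRing B] [StarModule ℂ B],
      ∀ a b c : B, S4Rel q a b c →
        ∃! φ : A →⋆ₐ[ℂ] B, φ α = a ∧ φ β = b ∧ φ z = c

/-- Let `0 < |q| < 1` and let `(α, β, z)` satisfy (s4rel) with parameter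
`q` in a unital complex *-algebra `A`.  Any character `χ` of `A` (unital ℂ-algebra
homomorphism with `χ(a*) = conj(χ(a))`) satisfies `χ(β) = 0`, `χ(z)` real, and
`|χ(α)|² + χ(z)² = 1`. -/
theorem s4_q_characters {A : Type*} [Ring A] [Algebra ℂ A] [StarRing A] [StarModule ℂ A]
    (q : ℂ) (h0 : 0 < ‖q‖) (h1 : ‖q‖ < 1)
    (α β z : A) (h : S4Rel q α β z)
    (χ : A →ₐ[ℂ] ℂ) (hχ : ∀ a : A, χ (star a) = (starRingEnd ℂ) (χ a)) :
    χ β = 0 ∧ (starRingEnd ℂ) (χ z) = χ z ∧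
      ((‖χ α‖ : ℝ) : ℂ) ^ 2 + (χ z) ^ 2 = 1 := by
  obtain ⟨hz, _, _, _, _, _, h7, h8⟩ := h
  have e7 := congrArg χ h7
  have e8 := congrArg χ h8
  simp only [map_add, map_mul, map_smul, map_pow, map_one, hχ, smul_eq_mul] at e7 e8
  have hcz : (starRingEnd ℂ) (χ z) = χ z := by
    have := hχ z; rw [hz] at this; exact this.symm
  have hq1 : q * (starRingEnd ℂ) q ≠ 1 := by
    rw [Complex.mul_conj]
    intro hcontra
    have h2 : Complex.normSq q = 1 := by exact_mod_cast hcontra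
    have : ‖q‖ ^ 2 = 1 := by rw [Complex.sq_norm]; exact h2
    nlinarith
  have hb0 : χ β = 0 := by
    have hsub : (1 - q * (starRingEnd ℂ) q) * ((starRingEnd ℂ) (χ β) * χ β) = 0 := by
      linear_combination e8 - e7
    rcases mul_eq_zero.mp hsub with h' | h'
    · exact absurd (by linear_combination -h') hq1
    · have hn : ((Complex.normSq (χ β) : ℂ)) = 0 := by
        rw [← Complex.mul_conj]; linear_combination h'
      exact Complex.normSq_eq_zero.mp (by exact_mod_cast hn)
  refine ⟨hb0, hcz, ?_⟩
  have habs : ((‖χ α‖ : ℝ) : ℂ) ^ 2 = (starRingEnd ℂ) (χ α) * χ α := by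
    have hsq : ((‖χ α‖ : ℝ) : ℂ) ^ 2 = (Complex.normSq (χ α) : ℂ) := by
      exact_mod_cast congrArg Complex.ofReal (Complex.sq_norm (χ α))
    rw [hsq, ← Complex.mul_conj]; ring
  rw [habs]
  rw [hb0] at e7
  linear_combination e7
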